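/- For every integer n ≥ 0, every real x > 0, and all reals ε, ε_s with 0 < ε ≤ ε_s, the quadratic f_n satisfies f_n(−1) > 0. -/

import Mathlib

open Real Finset

/-- Modified spherical Bessel function of the second kind `k_n`, explicit closed form. -/
noncomputable def kBes (n : ℕ) (x : ℝ) : ℝ :=
  (Real.exp (-x) / x) *
    ∑ l ∈ Finset.range (n + 1),
      (Nat.factorial (n + l) : ℝ) /
        ((Nat.factorial l : ℝ) * (Nat.factorial (n - l) : ℝ) * (2 * x) ^ l)

/-- Modified spherical Bessel function of the first kind `i_n`, explicit closed form. -/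
noncomputable def iBes (n : ℕ) (x : ℝ) : ℝ :=
  (1 / (2 * x)) *
    (Real.exp x *
        ∑ l ∈ Finset.range (n + 1),
          (-1 : ℝ) ^ l * (Nat.factorial (n + l) : ℝ) /
            ((Nat.factorial l : ℝ) * (Nat.factorial (n - l) : ℝ) * (2 * x) ^ l)
      + (-1 : ℝ) ^ (n + 1) * Real.exp (-x) *
        ∑ l ∈ Finset.range (n + 1),
          (Nat.factorial (n + l) : ℝ) /
            ((Nat.factorial l : ℝ) * (Nat.factorial (n - l) : ℝ) * (2 * x) ^ l))

/-- The quadratic `f_n(λ)` from the spectral-radius proof. -/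
noncomputable def fquad (n : ℕ) (x eps epss lam : ℝ) : ℝ :=
  let A : ℝ := (n : ℝ) * (eps - epss) * iBes n x - x * epss * iBes (n + 1) x
  let B : ℝ := (n : ℝ) * (eps - epss) * kBes n x + x * epss * kBes (n + 1) x
  let C : ℝ := (n : ℝ) * iBes n x + x * iBes (n + 1) x
  let D : ℝ := (n : ℝ) * kBes n x - x * kBes (n + 1) x
  let F : ℝ := 2 * (n : ℝ) / x + iBes (n + 1) x / iBes n x - kBes (n + 1) x / kBes n x
  A ^ 2 * D * kBes n x * lam ^ 2 - A * B * x * iBes n x * kBes n x * F * lam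
    + B ^ 2 * C * iBes n x

noncomputable def cB (n l : ℕ) : ℝ :=
  (Nat.factorial (n + l) : ℝ) / ((Nat.factorial l : ℝ) * (Nat.factorial (n - l) : ℝ))

noncomputable def thB (n : ℕ) (x : ℝ) : ℝ :=
  ∑ l ∈ Finset.range (n + 1), cB n l * x ^ (n - l) / 2 ^ l

noncomputable def psB (n : ℕ) (x : ℝ) : ℝ := (-1) ^ n * thB n (-x)

lemma factorial_cast_ne (m : ℕ) : ((Nat.factorial m : ℕ) : ℝ) ≠ 0 := by
  exact_mod_cast Nat.factorial_ne_zero m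

lemma cB_pos (n l : ℕ) : 0 < cB n l := by
  unfold cB
  have h1 : (0:ℝ) < (Nat.factorial (n+l) : ℝ) := by exact_mod_cast Nat.factorial_pos _
  have h2 : (0:ℝ) < (Nat.factorial l : ℝ) := by exact_mod_cast Nat.factorial_pos _
  have h3 : (0:ℝ) < (Nat.factorial (n-l) : ℝ) := by exact_mod_cast Nat.factorial_pos _
  positivity

lemma cB_zero (n : ℕ) : cB n 0 = 1 := by
  unfold cB
  simp only [Nat.add_zero, Nat.sub_zero, Nat.factorial_zero, Nat.cast_one, one_mul]
  exact div_self (factorial_cast_ne n)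

lemma cB_id1 (l d : ℕ) :
    cB (l+d+3) (l+1) = (4*((l:ℝ)+(d:ℝ))+10) * cB (l+d+2) l + cB (l+d+1) (l+1) := by
  unfold cB
  rw [show l+d+3+(l+1) = 2*l+d+1+1+1+1 by omega, show (l+d+3)-(l+1) = d+1+1 by omega,
      show l+d+2+l = 2*l+d+1+1 by omega, show (l+d+2)-l = d+1+1 by omega,
      show l+d+1+(l+1) = 2*l+d+1+1 by omega, show (l+d+1)-(l+1) = d by omega]
  simp only [Nat.factorial_succ]
  push_cast
  have h1 := factorial_cast_ne l
  have h2 := factorial_cast_ne d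
  have h3 := factorial_cast_ne (2*l+d+1)
  field_simp
  ring

lemma cB_b1 (n : ℕ) : cB (n+2) (n+1) = (4*(n:ℝ)+6) * cB (n+1) n := by
  unfold cB
  rw [show n+2+(n+1) = 2*n+1+1+1 by omega, show (n+2)-(n+1) = 1 by omega,
      show n+1+n = 2*n+1 by omega, show (n+1)-n = 1 by omega]
  simp only [Nat.factorial_succ, Nat.factorial_one]
  push_cast
  have h1 := factorial_cast_ne n
  have h3 := factorial_cast_ne (2*n)
  field_simp
  ring

lemma cB_b2 (n : ℕ) : cB (n+2) (n+2) = (4*(n:ℝ)+6) * cB (n+1) (n+1) := by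
  unfold cB
  rw [show n+2+(n+2) = 2*n+1+1+1+1 by omega, show (n+2)-(n+2) = 0 by omega,
      show n+1+(n+1) = 2*n+1+1 by omega, show (n+1)-(n+1) = 0 by omega]
  rw [show n+2 = n+1+1 by omega]
  simp only [Nat.factorial_succ, Nat.factorial_zero]
  push_cast
  have h1 := factorial_cast_ne n
  have h3 := factorial_cast_ne (2*n)
  field_simp
  ring

lemma cB_id2 (l d : ℕ) :
    2*((d:ℝ)+2) * cB (l+d+2) l = cB (l+d+2) (l+1) - cB (l+d+1) (l+1) := by
  unfold cB
  rw [show l+d+2+l = 2*l+d+1+1 by omega, show (l+d+2)-l = d+1+1 by omega,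
      show l+d+2+(l+1) = 2*l+d+1+1+1 by omega, show (l+d+2)-(l+1) = d+1 by omega,
      show l+d+1+(l+1) = 2*l+d+1+1 by omega, show (l+d+1)-(l+1) = d by omega]
  simp only [Nat.factorial_succ]
  push_cast
  have h1 := factorial_cast_ne l
  have h2 := factorial_cast_ne d
  have h3 := factorial_cast_ne (2*l+d+1)
  field_simp
  ring

lemma cB_d1 (n : ℕ) : 2 * cB (n+1) n = cB (n+1) (n+1) := by
  unfold cB
  rw [show n+1+n = 2*n+1 by omega, show (n+1)-n = 1 by omega,
      show n+1+(n+1) = 2*n+1+1 by omega, show (n+1)-(n+1) = 0 by omega]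
  simp only [Nat.factorial_succ, Nat.factorial_one, Nat.factorial_zero]
  push_cast
  have h1 := factorial_cast_ne n
  have h3 := factorial_cast_ne (2*n)
  field_simp
  ring

lemma thB_rec (n : ℕ) (x : ℝ) :
    thB (n+2) x = (2*(n:ℝ)+3) * thB (n+1) x + x^2 * thB n x := by
  unfold thB
  rw [Finset.mul_sum, Finset.mul_sum]
  have hx2 : ∀ l ∈ Finset.range (n+1), x^2 * (cB n l * x ^ (n-l) / 2^l)
      = cB n l * x ^ (n+2-l) / 2^l := by
    intro l hl
    rw [Finset.mem_range] at hl
    rw [show n+2-l = (n-l)+2 by omega, pow_add]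
    ring
  rw [Finset.sum_congr rfl hx2]
  rw [Finset.sum_range_succ' (fun l => cB (n+2) l * x ^ (n+2-l) / 2^l) (n+2)]
  rw [Finset.sum_range_succ' (fun l => cB n l * x ^ (n+2-l) / 2^l) n]
  rw [Finset.sum_range_succ (fun l => cB (n+2) (l+1) * x ^ (n+2-(l+1)) / 2^(l+1)) (n+1)]
  rw [Finset.sum_range_succ (fun l => cB (n+2) (l+1) * x ^ (n+2-(l+1)) / 2^(l+1)) n]
  rw [Finset.sum_range_succ (fun l => (2*(n:ℝ)+3) * (cB (n+1) l * x ^ (n+1-l) / 2^l)) (n+1)]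
  rw [Finset.sum_range_succ (fun l => (2*(n:ℝ)+3) * (cB (n+1) l * x ^ (n+1-l) / 2^l)) n]
  have hgen : ∑ l ∈ Finset.range n, cB (n+2) (l+1) * x ^ (n+2-(l+1)) / 2^(l+1)
      = ∑ l ∈ Finset.range n, ((2*(n:ℝ)+3) * (cB (n+1) l * x ^ (n+1-l) / 2^l)
          + cB n (l+1) * x ^ (n+2-(l+1)) / 2^(l+1)) := by
    refine Finset.sum_congr rfl (fun l hl => ?_)
    rw [Finset.mem_range] at hl
    obtain ⟨d, rfl⟩ : ∃ d, n = l + d + 1 := ⟨n - l - 1, by omega⟩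
    rw [show l+d+1+2 = l+d+3 by omega, show l+d+1+1 = l+d+2 by omega]
    rw [cB_id1 l d]
    rw [show l+d+3-(l+1) = d+2 by omega, show l+d+1+1-l = d+2 by omega]
    push_cast
    ring
  rw [hgen, Finset.sum_add_distrib]
  rw [show n+1+1 = n+2 by omega]
  simp only [cB_b1, cB_b2, cB_zero]
  push_cast
  ring

lemma thB_hasDeriv (n : ℕ) (x : ℝ) :
    HasDerivAt (fun y => thB (n+1) y) (thB (n+1) x - x * thB n x) x := by
  have key : ∑ l ∈ Finset.range (n+2), cB (n+1) l * ((n+1-l : ℕ) * x^(n-l)) / 2^l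
      = thB (n+1) x - x * thB n x := by
    unfold thB
    rw [Finset.mul_sum]
    have hx1 : ∀ l ∈ Finset.range (n+1), x * (cB n l * x ^ (n-l) / 2^l)
        = cB n l * x ^ (n+1-l) / 2^l := by
      intro l hl; rw [Finset.mem_range] at hl
      rw [show n+1-l = (n-l)+1 by omega, pow_succ]; ring
    rw [Finset.sum_congr rfl hx1]
    rw [show n+1+1 = n+2 from rfl]
    rw [Finset.sum_range_succ' (fun l => cB (n+1) l * x ^ (n+1-l) / 2^l) (n+1)]
    rw [Finset.sum_range_succ' (fun l => cB n l * x ^ (n+1-l) / 2^l) n]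
    rw [Finset.sum_range_succ (fun l => cB (n+1) l * ((n+1-l : ℕ) * x^(n-l)) / 2^l) (n+1)]
    rw [Finset.sum_range_succ (fun l => cB (n+1) l * ((n+1-l : ℕ) * x^(n-l)) / 2^l) n]
    rw [Finset.sum_range_succ (fun l => cB (n+1) (l+1) * x ^ (n+1-(l+1)) / 2^(l+1)) n]
    have hgen : ∑ l ∈ Finset.range n, cB (n+1) l * ((n+1-l : ℕ) * x^(n-l)) / 2^l
        = ∑ l ∈ Finset.range n, (cB (n+1) (l+1) * x ^ (n+1-(l+1)) / 2^(l+1)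
            - cB n (l+1) * x ^ (n+1-(l+1)) / 2^(l+1)) := by
      refine Finset.sum_congr rfl (fun l hl => ?_)
      rw [Finset.mem_range] at hl
      obtain ⟨d, rfl⟩ : ∃ d, n = l + d + 1 := ⟨n - l - 1, by omega⟩
      rw [show l+d+1+1 = l+d+2 by omega]
      rw [show l+d+2-l = d+2 by omega, show l+d+2-(l+1) = d+1 by omega,
          show l+d+1-l = d+1 by omega]
      have h := cB_id2 l d
      push_cast
      linear_combination (x^(d+1)/2^(l+1)) * h
    rw [hgen, Finset.sum_sub_distrib]
    simp only [show n+1-(n+1) = 0 by omega, show n-(n+1) = 0 by omega,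
      show n+1-n = 1 by omega, show n-n = 0 by omega, show n+1-0 = n+1 by omega,
      cB_zero, Nat.cast_zero, Nat.cast_one]
    have hd1 := cB_d1 n
    push_cast
    linear_combination (1/2^(n+1) : ℝ) * hd1
  have hd : HasDerivAt (fun y => thB (n+1) y)
      (∑ l ∈ Finset.range (n+2), cB (n+1) l * ((n+1-l : ℕ) * x^(n-l)) / 2^l) x := by
    have hterm : ∀ l ∈ Finset.range (n+2), HasDerivAt (fun y : ℝ => cB (n+1) l * y^(n+1-l) / 2^l)
        (cB (n+1) l * ((n+1-l : ℕ) * x^(n-l)) / 2^l) x := by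
      intro l hl
      have h1 : HasDerivAt (fun y : ℝ => y^(n+1-l)) ((n+1-l : ℕ) * x^(n+1-l-1)) x :=
        hasDerivAt_pow _ x
      rw [show n+1-l-1 = n-l by omega] at h1
      exact (h1.const_mul (cB (n+1) l)).div_const ((2:ℝ)^l)
    have := HasDerivAt.fun_sum hterm
    simp only [thB]
    rw [show n+1+1 = n+2 from rfl]
    exact this
  exact key ▸ hd

noncomputable def phB (n : ℕ) (x : ℝ) : ℝ := Real.exp (2*x) * psB n x - (-1) ^ n * thB n x

lemma sum_k (n : ℕ) {x : ℝ} (hx : x ≠ 0) :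
    ∑ l ∈ Finset.range (n + 1),
      (Nat.factorial (n + l) : ℝ) /
        ((Nat.factorial l : ℝ) * (Nat.factorial (n - l) : ℝ) * (2 * x) ^ l)
      = thB n x / x ^ n := by
  unfold thB
  rw [Finset.sum_div]
  refine Finset.sum_congr rfl (fun l hl => ?_)
  rw [Finset.mem_range] at hl
  have hp : x ^ (n-l) * x ^ l = x ^ n := by rw [← pow_add]; congr 1; omega
  have h2 : ((Nat.factorial l : ℝ) * (Nat.factorial (n - l) : ℝ)) ≠ 0 := by
    have := Nat.factorial_ne_zero l
    have := Nat.factorial_ne_zero (n-l)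
    positivity
  rw [show (Nat.factorial (n + l) : ℝ) /
        ((Nat.factorial l : ℝ) * (Nat.factorial (n - l) : ℝ) * (2 * x) ^ l)
      = cB n l / (2*x)^l by unfold cB; ring]
  rw [mul_pow]
  field_simp
  linear_combination (-(cB n l)) * hp

lemma sum_i (n : ℕ) {x : ℝ} (hx : x ≠ 0) :
    ∑ l ∈ Finset.range (n + 1),
      (-1 : ℝ) ^ l * (Nat.factorial (n + l) : ℝ) /
        ((Nat.factorial l : ℝ) * (Nat.factorial (n - l) : ℝ) * (2 * x) ^ l)
      = psB n x / x ^ n := by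
  unfold psB thB
  rw [Finset.mul_sum, Finset.sum_div]
  refine Finset.sum_congr rfl (fun l hl => ?_)
  rw [Finset.mem_range] at hl
  have hp : x ^ (n-l) * x ^ l = x ^ n := by rw [← pow_add]; congr 1; omega
  have hsgn : ((-1:ℝ)) ^ n = (-1)^(n-l) * (-1)^l := by rw [← pow_add]; congr 1; omega
  have hneg : (-x) ^ (n-l) = (-1)^(n-l) * x^(n-l) := by rw [neg_pow]
  have hsq : ((-1:ℝ))^(n-l) * ((-1:ℝ))^(n-l) = 1 := by
    rw [← pow_add]; exact Even.neg_one_pow ⟨n-l, rfl⟩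
  have h2 : ((Nat.factorial l : ℝ) * (Nat.factorial (n - l) : ℝ)) ≠ 0 := by
    have := Nat.factorial_ne_zero l
    have := Nat.factorial_ne_zero (n-l)
    positivity
  have hkey : ((-1:ℝ))^(n-l) * ((-1:ℝ))^(n-l) * (x^(n-l) * x^l) = x^n := by
    rw [hsq, one_mul, hp]
  rw [show (-1 : ℝ) ^ l * (Nat.factorial (n + l) : ℝ) /
        ((Nat.factorial l : ℝ) * (Nat.factorial (n - l) : ℝ) * (2 * x) ^ l)
      = (-1)^l * cB n l / (2*x)^l by unfold cB; ring]
  rw [mul_pow, hneg, hsgn]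
  have heven : ((-1:ℝ))^((n-l)*2) = 1 := by rw [mul_comm, pow_mul]; norm_num
  field_simp
  linear_combination (-(cB n l * x^l * x^(n-l))) * heven
    + (-(cB n l)) * hp

lemma kBes_eq (n : ℕ) {x : ℝ} (hx : 0 < x) :
    kBes n x = Real.exp (-x) * thB n x / x ^ (n+1) := by
  unfold kBes
  rw [sum_k n (ne_of_gt hx)]
  rw [pow_succ]
  have hx' : x ≠ 0 := ne_of_gt hx
  field_simp

lemma iBes_eq (n : ℕ) {x : ℝ} (hx : 0 < x) :
    iBes n x = (Real.exp x * psB n x + (-1)^(n+1) * Real.exp (-x) * thB n x) / (2 * x ^ (n+1)) := by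
  unfold iBes
  rw [sum_k n (ne_of_gt hx), sum_i n (ne_of_gt hx)]
  rw [pow_succ]
  have hx' : x ≠ 0 := ne_of_gt hx
  field_simp
  ring

lemma iBes_phB (n : ℕ) {x : ℝ} (hx : 0 < x) :
    iBes n x = Real.exp (-x) * phB n x / (2 * x ^ (n+1)) := by
  rw [iBes_eq n hx]
  unfold phB
  have he : Real.exp (-x) * Real.exp (2*x) = Real.exp x := by
    rw [← Real.exp_add]; ring_nf
  have hsgn : ((-1:ℝ))^(n+1) = -(-1)^n := by rw [pow_succ]; ring
  rw [hsgn]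
  have hx' : x ≠ 0 := ne_of_gt hx
  field_simp
  linear_combination (norm := ring_nf) (-(psB n x)) * he

lemma psB_rec (n : ℕ) (x : ℝ) :
    psB (n+2) x = -(2*(n:ℝ)+3) * psB (n+1) x + x^2 * psB n x := by
  unfold psB
  rw [thB_rec n (-x)]
  have h2 : ((-1:ℝ))^(n+2) = (-1)^n := by rw [pow_add]; norm_num
  have h1 : ((-1:ℝ))^(n+1) = -(-1)^n := by rw [pow_succ]; ring
  rw [h1, h2]
  ring

lemma phB_rec (n : ℕ) (x : ℝ) :
    phB (n+2) x = -(2*(n:ℝ)+3) * phB (n+1) x + x^2 * phB n x := by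
  unfold phB
  rw [thB_rec n x, psB_rec n x]
  have h2 : ((-1:ℝ))^(n+2) = (-1)^n := by rw [pow_add]; norm_num
  have h1 : ((-1:ℝ))^(n+1) = -(-1)^n := by rw [pow_succ]; ring
  rw [h1, h2]
  ring

lemma psB_hasDeriv (n : ℕ) (x : ℝ) :
    HasDerivAt (fun y => psB (n+1) y) (-psB (n+1) x + x * psB n x) x := by
  have hneg : HasDerivAt (fun y : ℝ => -y) (-1) x := by
    exact hasDerivAt_neg' (x := x)
  have h := ((thB_hasDeriv n (-x)).comp x hneg).const_mul ((-1:ℝ)^(n+1))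
  have hsgn : ((-1:ℝ))^(n+1) = -(-1)^n := by rw [pow_succ]; ring
  have heq : (fun y => ((-1:ℝ)^(n+1)) * ((fun z => thB (n+1) z) ∘ fun z => -z) y)
      = fun y => psB (n+1) y := by
    funext y
    simp only [Function.comp]
    unfold psB
    rfl
  rw [heq] at h
  refine h.congr_deriv ?_
  unfold psB
  rw [hsgn]
  ring

lemma phB_hasDeriv (n : ℕ) (x : ℝ) :
    HasDerivAt (fun y => phB (n+1) y) (phB (n+1) x + x * phB n x) x := by
  have he : HasDerivAt (fun y : ℝ => Real.exp (2*y)) (Real.exp (2*x) * 2) x := by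
    have h1 : HasDerivAt (fun y : ℝ => 2*y) 2 x := by
      simpa using (hasDerivAt_id x).const_mul 2
    have := (Real.hasDerivAt_exp (2*x)).comp x h1
    simpa [Function.comp_def] using this
  have hmul := he.mul (psB_hasDeriv n x)
  have hth := (thB_hasDeriv n x).const_mul ((-1:ℝ)^(n+1))
  have h := hmul.sub hth
  have hsgn : ((-1:ℝ))^(n+1) = -(-1)^n := by rw [pow_succ]; ring
  have heq : (fun y => Real.exp (2*y) * psB (n+1) y - ((-1:ℝ)^(n+1)) * thB (n+1) y)
      = fun y => phB (n+1) y := by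
    funext y
    unfold phB
    rfl
  rw [← heq]
  refine h.congr_deriv ?_
  unfold phB
  rw [hsgn]
  ring

lemma thB_zero_fun (x : ℝ) : thB 0 x = 1 := by
  unfold thB
  rw [Finset.sum_range_one, cB_zero]
  norm_num

lemma psB_zero_fun (x : ℝ) : psB 0 x = 1 := by
  unfold psB
  rw [thB_zero_fun]
  norm_num

lemma phB_zero (n : ℕ) : phB n 0 = 0 := by
  unfold phB psB
  norm_num

lemma phB_pos (n : ℕ) : ∀ x : ℝ, 0 < x → 0 < phB n x := by
  induction n with
  | zero =>
    intro x hx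
    unfold phB
    rw [psB_zero_fun, thB_zero_fun]
    simp only [pow_zero, mul_one, one_mul]
    have : (1:ℝ) < Real.exp (2*x) := by
      have := Real.exp_lt_exp.mpr (show (0:ℝ) < 2*x by linarith)
      rwa [Real.exp_zero] at this
    linarith
  | succ m ih =>
    intro x hx
    have hg : ∀ y : ℝ, HasDerivAt (fun t => Real.exp (-t) * phB (m+1) t)
        (Real.exp (-y) * (y * phB m y)) y := by
      intro y
      have h1 : HasDerivAt (fun t : ℝ => Real.exp (-t)) (-Real.exp (-y)) y := by
        have hneg : HasDerivAt (fun t : ℝ => -t) (-1) y := by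
          exact hasDerivAt_neg' (x := y)
        simpa [Function.comp_def] using (Real.hasDerivAt_exp (-y)).comp y hneg
      have := h1.mul (phB_hasDeriv m y)
      refine this.congr_deriv ?_
      ring
    have hmono : StrictMonoOn (fun t => Real.exp (-t) * phB (m+1) t) (Set.Ici 0) := by
      apply strictMonoOn_of_deriv_pos (convex_Ici 0)
      · exact Continuous.continuousOn (by
          have : Differentiable ℝ (fun t => Real.exp (-t) * phB (m+1) t) :=
            fun y => (hg y).differentiableAt
          exact this.continuous)
      · intro y hy
        rw [interior_Ici] at hy
        rw [(hg y).deriv]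
        have := ih y hy
        have := Real.exp_pos (-y)
        have : (0:ℝ) < y := hy
        positivity
    have h0 : (fun t => Real.exp (-t) * phB (m+1) t) 0 = 0 := by
      simp [phB_zero]
    have := hmono (Set.self_mem_Ici) (Set.mem_Ici.mpr (le_of_lt hx)) hx
    rw [h0] at this
    have hexp := Real.exp_pos (-x)
    by_contra hc
    push_neg at hc
    have h5 : Real.exp (-x) * phB (m+1) x ≤ 0 :=
      mul_nonpos_of_nonneg_of_nonpos hexp.le hc
    exact absurd (this.trans_le h5) (lt_irrefl 0)

lemma kBes_pos (n : ℕ) {x : ℝ} (hx : 0 < x) : 0 < kBes n x := by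
  unfold kBes
  have h1 : 0 < Real.exp (-x) / x := by positivity
  refine mul_pos h1 (Finset.sum_pos (fun l hl => ?_) ⟨0, Finset.mem_range.mpr (by omega)⟩)
  have f1 : (0:ℝ) < (Nat.factorial (n+l) : ℝ) := by exact_mod_cast Nat.factorial_pos _
  have f2 : (0:ℝ) < (Nat.factorial l : ℝ) := by exact_mod_cast Nat.factorial_pos _
  have f3 : (0:ℝ) < (Nat.factorial (n-l) : ℝ) := by exact_mod_cast Nat.factorial_pos _
  positivity

lemma iBes_pos (n : ℕ) {x : ℝ} (hx : 0 < x) : 0 < iBes n x := by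
  rw [iBes_phB n hx]
  have h1 := phB_pos n x hx
  have h2 := Real.exp_pos (-x)
  positivity

lemma kBes_rec (n : ℕ) {x : ℝ} (hx : 0 < x) :
    kBes (n+2) x = kBes n x + (2*(n:ℝ)+3)/x * kBes (n+1) x := by
  rw [kBes_eq n hx, kBes_eq (n+1) hx, kBes_eq (n+2) hx, thB_rec n x]
  have hxne := ne_of_gt hx
  field_simp
  ring

lemma iBes_rec (n : ℕ) {x : ℝ} (hx : 0 < x) :
    iBes (n+2) x = iBes n x - (2*(n:ℝ)+3)/x * iBes (n+1) x := by
  rw [iBes_phB n hx, iBes_phB (n+1) hx, iBes_phB (n+2) hx, phB_rec n x]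
  have hxne := ne_of_gt hx
  field_simp
  ring

lemma cB_one_one : cB 1 1 = 2 := by unfold cB; norm_num [Nat.factorial]

lemma thB_one (x : ℝ) : thB 1 x = x + 1 := by
  unfold thB
  rw [Finset.sum_range_succ, Finset.sum_range_one, cB_zero, cB_one_one]
  norm_num

lemma hasDerivAt_expNeg (x : ℝ) : HasDerivAt (fun y : ℝ => Real.exp (-y)) (-Real.exp (-x)) x := by
  have hneg : HasDerivAt (fun t : ℝ => -t) (-1) x := by
    exact hasDerivAt_neg' (x := x)
  simpa [Function.comp_def] using (Real.hasDerivAt_exp (-x)).comp x hneg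

lemma kBes_hasDeriv (n : ℕ) {x : ℝ} (hx : 0 < x) :
    HasDerivAt (kBes n) (-(kBes (n+1) x) + (n:ℝ)/x * kBes n x) x := by
  have hx' : x ≠ 0 := ne_of_gt hx
  cases n with
  | zero =>
    have hev : kBes 0 =ᶠ[nhds x] (fun y => Real.exp (-y) / y) := by
      filter_upwards [Ioi_mem_nhds hx] with y hy
      rw [kBes_eq 0 hy, thB_zero_fun]
      simp [pow_one]
    have hq := (hasDerivAt_expNeg x).div (hasDerivAt_id x) hx'
    have h2 : HasDerivAt (kBes 0) ((-Real.exp (-x) * x - Real.exp (-x) * 1) / x ^ 2) x :=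
      hq.congr_of_eventuallyEq hev
    have hval : (-Real.exp (-x) * x - Real.exp (-x) * 1) / x ^ 2
        = -(kBes 1 x) + ((0:ℕ):ℝ)/x * kBes 0 x := by
      rw [kBes_eq 1 hx, kBes_eq 0 hx, thB_one, thB_zero_fun]
      push_cast
      field_simp
      ring
    rw [← hval]
    exact h2
  | succ m =>
    have hev : kBes (m+1) =ᶠ[nhds x] (fun y => Real.exp (-y) * thB (m+1) y / y^(m+2)) := by
      filter_upwards [Ioi_mem_nhds hx] with y hy
      exact kBes_eq (m+1) hy
    have hnum := (hasDerivAt_expNeg x).mul (thB_hasDeriv m x)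
    have hden : HasDerivAt (fun y : ℝ => y^(m+2)) (((m:ℝ)+2) * x^(m+1)) x := by
      have h := hasDerivAt_pow (m+2) x
      norm_num at h
      convert h using 2
    have hq := hnum.div hden (pow_ne_zero _ hx')
    have h2 := hq.congr_of_eventuallyEq hev
    have hval : ((-Real.exp (-x) * thB (m+1) x +
          Real.exp (-x) * (thB (m+1) x - x * thB m x)) * x^(m+2)
          - Real.exp (-x) * thB (m+1) x * (((m:ℝ)+2) * x^(m+1))) / (x^(m+2))^2
        = -(kBes (m+1+1) x) + ((m+1:ℕ):ℝ)/x * kBes (m+1) x := by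
      rw [kBes_rec m hx, kBes_eq m hx, kBes_eq (m+1) hx]
      push_cast
      field_simp
      ring
    rw [← hval]
    exact h2
lemma psB_one (x : ℝ) : psB 1 x = x - 1 := by
  unfold psB
  rw [thB_one]
  ring

lemma iBes_hasDeriv (n : ℕ) {x : ℝ} (hx : 0 < x) :
    HasDerivAt (iBes n) (iBes (n+1) x + (n:ℝ)/x * iBes n x) x := by
  have hx' : x ≠ 0 := ne_of_gt hx
  have hE := Real.exp_ne_zero x
  cases n with
  | zero =>
    have hev : iBes 0 =ᶠ[nhds x] (fun y => (Real.exp y - Real.exp (-y)) / (2*y)) := by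
      filter_upwards [Ioi_mem_nhds hx] with y hy
      rw [iBes_eq 0 hy, psB_zero_fun, thB_zero_fun]
      norm_num
      ring
    have hnum := (Real.hasDerivAt_exp x).sub (hasDerivAt_expNeg x)
    have hden : HasDerivAt (fun y : ℝ => 2*y) 2 x := by
      simpa using (hasDerivAt_id x).const_mul 2
    have hq := hnum.div hden (by positivity : (2:ℝ)*x ≠ 0)
    have h2 := hq.congr_of_eventuallyEq hev
    have hval : ((Real.exp x - -Real.exp (-x)) * (2*x) - (Real.exp x - Real.exp (-x)) * 2) / (2*x)^2
        = iBes 1 x + ((0:ℕ):ℝ)/x * iBes 0 x := by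
      rw [iBes_phB 1 hx, iBes_phB 0 hx]
      unfold phB
      rw [psB_one, thB_one, psB_zero_fun, thB_zero_fun]
      rw [show (2:ℝ)*x = x + x by ring, Real.exp_add, Real.exp_neg]
      push_cast
      field_simp
      ring
    rw [← hval]
    exact h2
  | succ m =>
    have hev : iBes (m+1) =ᶠ[nhds x]
        (fun y => Real.exp (-y) * phB (m+1) y / (2*y^(m+2))) := by
      filter_upwards [Ioi_mem_nhds hx] with y hy
      exact iBes_phB (m+1) hy
    have hnum := (hasDerivAt_expNeg x).mul (phB_hasDeriv m x)
    have hden : HasDerivAt (fun y : ℝ => 2*y^(m+2)) (2*(((m:ℝ)+2) * x^(m+1))) x := by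
      have h : HasDerivAt (fun y : ℝ => y^(m+2)) (((m:ℝ)+2) * x^(m+1)) x := by
        have h := hasDerivAt_pow (m+2) x
        norm_num at h
        convert h using 2
      simpa using h.const_mul 2
    have hq := hnum.div hden (by positivity : (2:ℝ)*x^(m+2) ≠ 0)
    have h2 := hq.congr_of_eventuallyEq hev
    have hval : ((-Real.exp (-x) * phB (m+1) x +
          Real.exp (-x) * (phB (m+1) x + x * phB m x)) * (2*x^(m+2))
          - Real.exp (-x) * phB (m+1) x * (2*(((m:ℝ)+2) * x^(m+1)))) / (2*x^(m+2))^2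
        = iBes (m+1+1) x + ((m+1:ℕ):ℝ)/x * iBes (m+1) x := by
      rw [iBes_rec m hx, iBes_phB m hx, iBes_phB (m+1) hx]
      push_cast
      field_simp
      ring
    rw [← hval]
    exact h2

lemma iBes_le_exp : ∀ n : ℕ, ∀ x : ℝ, 0 < x → iBes n x ≤ Real.exp x := by
  intro n
  induction n using Nat.strong_induction_on with
  | _ n ih =>
    match n with
    | 0 =>
      intro x hx
      rw [iBes_eq 0 hx, psB_zero_fun, thB_zero_fun]
      have hFE : Real.exp (-x) * Real.exp x = 1 := by
        rw [← Real.exp_add]; simp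
      have h := Real.add_one_le_exp (-(2*x))
      rw [show -(2*x) = (-x) + (-x) by ring, Real.exp_add] at h
      have h2 : (-x + -x + 1) * Real.exp x ≤ Real.exp (-x) * Real.exp (-x) * Real.exp x :=
        mul_le_mul_of_nonneg_right h (Real.exp_pos x).le
      rw [div_le_iff₀ (by positivity : (0:ℝ) < 2 * x^(0+1))]
      norm_num
      nlinarith [h2, hFE, Real.exp_pos x, Real.exp_pos (-x)]
    | 1 =>
      intro x hx
      rw [iBes_eq 1 hx, psB_one, thB_one]
      have hFE : Real.exp (-x) * Real.exp x = 1 := by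
        rw [← Real.exp_add]; simp
      have hE2 : 2*x+1 ≤ Real.exp x * Real.exp x := by
        have := Real.add_one_le_exp (2*x)
        rw [show (2:ℝ)*x = x+x by ring, Real.exp_add] at this
        linarith
      rw [div_le_iff₀ (by positivity : (0:ℝ) < 2 * x^(1+1))]
      norm_num
      have hq : (2*x+1)*(2*x^2-x+1) ≤ (Real.exp x * Real.exp x)*(2*x^2-x+1) :=
        mul_le_mul_of_nonneg_right hE2 (by nlinarith)
      nlinarith [hq, hFE, Real.exp_pos x, Real.exp_pos (-x),
        mul_le_mul_of_nonneg_right hq (Real.exp_pos (-x)).le]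
    | (m+2) =>
      intro x hx
      rw [iBes_rec m hx]
      have h1 := ih m (by omega) x hx
      have h2 := iBes_pos (m+1) hx
      have h3 : 0 < (2*(m:ℝ)+3)/x := by positivity
      nlinarith

noncomputable def sC (n : ℕ) : ℝ := ∑ l ∈ Finset.range (n+1), cB n l

lemma kBes_le (n : ℕ) {x : ℝ} (hx : 1 ≤ x) : kBes n x ≤ Real.exp (-x) * sC n := by
  have hx0 : (0:ℝ) < x := lt_of_lt_of_le one_pos hx
  unfold kBes sC
  have hterm : ∀ l ∈ Finset.range (n+1),
      (Nat.factorial (n + l) : ℝ) /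
        ((Nat.factorial l : ℝ) * (Nat.factorial (n - l) : ℝ) * (2 * x) ^ l) ≤ cB n l := by
    intro l _
    rw [show (Nat.factorial (n + l) : ℝ) /
        ((Nat.factorial l : ℝ) * (Nat.factorial (n - l) : ℝ) * (2 * x) ^ l)
      = cB n l / (2*x)^l by unfold cB; ring]
    have h1 : (1:ℝ) ≤ (2*x)^l := one_le_pow₀ (by linarith)
    exact div_le_self (cB_pos n l).le h1
  have hsum := Finset.sum_le_sum hterm
  have hpos : (0:ℝ) ≤ ∑ l ∈ Finset.range (n+1),
      (Nat.factorial (n + l) : ℝ) /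
        ((Nat.factorial l : ℝ) * (Nat.factorial (n - l) : ℝ) * (2 * x) ^ l) := by
    apply Finset.sum_nonneg
    intro l _
    have f1 : (0:ℝ) ≤ (Nat.factorial (n+l) : ℝ) := by positivity
    have f2 : (0:ℝ) < (Nat.factorial l : ℝ) := by exact_mod_cast Nat.factorial_pos _
    have f3 : (0:ℝ) < (Nat.factorial (n-l) : ℝ) := by exact_mod_cast Nat.factorial_pos _
    positivity
  have hfrac : Real.exp (-x) / x ≤ Real.exp (-x) :=
    div_le_self (Real.exp_pos (-x)).le hx
  have hfrac0 : 0 ≤ Real.exp (-x) / x := by positivity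
  calc (Real.exp (-x) / x) * _ ≤ (Real.exp (-x) / x) * ∑ l ∈ Finset.range (n+1), cB n l :=
        mul_le_mul_of_nonneg_left hsum hfrac0
    _ ≤ Real.exp (-x) * ∑ l ∈ Finset.range (n+1), cB n l := by
        apply mul_le_mul_of_nonneg_right hfrac
        exact le_trans hpos hsum

lemma sC_pos (n : ℕ) : 0 < sC n := by
  unfold sC
  exact Finset.sum_pos (fun l _ => cB_pos n l) ⟨0, Finset.mem_range.mpr (by omega)⟩

lemma turan_i (n : ℕ) {x : ℝ} (hx : 0 < x) :
    iBes n x * iBes (n+2) x < iBes (n+1) x * iBes (n+1) x := by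
  set g : ℝ → ℝ :=
    fun y => y^3 * (iBes (n+1) y * iBes (n+1) y - iBes n y * iBes (n+2) y) with hgdef
  have hgd : ∀ y : ℝ, 0 < y →
      HasDerivAt g (2*y^2*(iBes (n+1) y * iBes (n+1) y)) y := by
    intro y hy
    have hy' : y ≠ 0 := ne_of_gt hy
    have h0 := iBes_hasDeriv n hy
    have h1 := iBes_hasDeriv (n+1) hy
    have h2' : HasDerivAt (iBes (n+2)) (iBes (n+1) y - ((n:ℝ)+3)/y * iBes (n+2) y) y := by
      have hrec := iBes_rec (n+1) hy
      have h := iBes_hasDeriv (n+2) hy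
      rw [show n+2+1 = n+1+2 by omega, hrec] at h
      convert h using 1
      push_cast
      ring
    have hD := (h1.mul h1).sub (h0.mul h2')
    have hg3 : HasDerivAt (fun y : ℝ => y^3) (3*y^2) y := by
      have := hasDerivAt_pow 3 y
      norm_num at this
      exact this
    have hprod := hg3.mul hD
    have hval : 3*y^2 * (iBes (n+1) y * iBes (n+1) y - iBes n y * iBes (n+2) y)
        + y^3 * ((iBes (n+1+1) y + ((n+1:ℕ):ℝ)/y * iBes (n+1) y) * iBes (n+1) y
            + iBes (n+1) y * (iBes (n+1+1) y + ((n+1:ℕ):ℝ)/y * iBes (n+1) y)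
          - ((iBes (n+1) y + (n:ℝ)/y * iBes n y) * iBes (n+2) y
            + iBes n y * (iBes (n+1) y - ((n:ℝ)+3)/y * iBes (n+2) y)))
        = 2*y^2*(iBes (n+1) y * iBes (n+1) y) := by
      rw [show n+1+1 = n+2 by omega, iBes_rec n hy]
      push_cast
      field_simp
      ring
    rw [hgdef, ← hval]
    exact hprod
  have hmono : StrictMonoOn g (Set.Ioi 0) := by
    apply strictMonoOn_of_deriv_pos (convex_Ioi 0)
    · intro y hy
      exact ((hgd y hy).differentiableAt.continuousAt).continuousWithinAt
    · intro y hy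
      rw [interior_Ioi] at hy
      rw [(hgd y hy).deriv]
      have h := iBes_pos (n+1) hy
      have hy0 : (0:ℝ) < y := hy
      exact mul_pos (mul_pos (by norm_num) (pow_pos hy0 2)) (mul_pos h h)
  have hge : ∀ z : ℝ, 0 < z → 0 ≤ g z := by
    intro z hz
    have hbound : ∀ y : ℝ, 0 < y → y < z → -(y^3 * (Real.exp z * Real.exp z)) ≤ g z := by
      intro y hy hyz
      have hmem : g y < g z := hmono (Set.mem_Ioi.mpr hy) (Set.mem_Ioi.mpr (hy.trans hyz)) hyz
      have hb1 : iBes n y * iBes (n+2) y ≤ Real.exp z * Real.exp z := by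
        have e1 := iBes_le_exp n y hy
        have e2 := iBes_le_exp (n+2) y hy
        have p1 := iBes_pos n hy
        have p2 := iBes_pos (n+2) hy
        have hez : Real.exp y ≤ Real.exp z := Real.exp_le_exp.mpr (le_of_lt hyz)
        nlinarith [Real.exp_pos y]
      have hsq : 0 ≤ iBes (n+1) y * iBes (n+1) y :=
        mul_nonneg (iBes_pos (n+1) hy).le (iBes_pos (n+1) hy).le
      have : -(y^3 * (Real.exp z * Real.exp z)) ≤ g y := by
        simp only [hgdef]
        have hy3 : (0:ℝ) ≤ y^3 := by positivity
        nlinarith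
      linarith
    have htend : Filter.Tendsto (fun y : ℝ => -(y^3 * (Real.exp z * Real.exp z)))
        (nhdsWithin 0 (Set.Ioi 0)) (nhds 0) := by
      have hc : Continuous (fun y : ℝ => -(y^3 * (Real.exp z * Real.exp z))) := by
        continuity
      have h2 := (hc.tendsto 0).mono_left
        (nhdsWithin_le_nhds (s := Set.Ioi (0:ℝ)))
      simpa using h2
    refine le_of_tendsto htend ?_
    filter_upwards [Ioo_mem_nhdsGT_of_mem (Set.left_mem_Ico.mpr hz)] with y hy
    exact hbound y hy.1 hy.2
  have hfin : 0 < g x := by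
    have h1 := hge (x/2) (by linarith)
    have h2 : g (x/2) < g x :=
      hmono (Set.mem_Ioi.mpr (by linarith)) (Set.mem_Ioi.mpr hx) (by linarith)
    linarith
  simp only [hgdef] at hfin
  by_contra hc
  push_neg at hc
  have : x^3 * (iBes (n+1) x * iBes (n+1) x - iBes n x * iBes (n+2) x) ≤ 0 :=
    mul_nonpos_of_nonneg_of_nonpos (by positivity) (by linarith)
  linarith

lemma turan_k (n : ℕ) {x : ℝ} (hx : 0 < x) :
    kBes (n+1) x * kBes (n+1) x < kBes n x * kBes (n+2) x := by
  set g : ℝ → ℝ :=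
    fun y => y^3 * (kBes n y * kBes (n+2) y - kBes (n+1) y * kBes (n+1) y) with hgdef
  have hgd : ∀ y : ℝ, 0 < y →
      HasDerivAt g (-(2*y^2*(kBes (n+1) y * kBes (n+1) y))) y := by
    intro y hy
    have hy' : y ≠ 0 := ne_of_gt hy
    have h0 := kBes_hasDeriv n hy
    have h1 := kBes_hasDeriv (n+1) hy
    have h2' : HasDerivAt (kBes (n+2)) (-(kBes (n+1) y) - ((n:ℝ)+3)/y * kBes (n+2) y) y := by
      have hrec := kBes_rec (n+1) hy
      have h := kBes_hasDeriv (n+2) hy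
      rw [show n+2+1 = n+1+2 by omega, hrec] at h
      convert h using 1
      push_cast
      ring
    have hD := (h0.mul h2').sub (h1.mul h1)
    have hg3 : HasDerivAt (fun y : ℝ => y^3) (3*y^2) y := by
      have := hasDerivAt_pow 3 y
      norm_num at this
      exact this
    have hprod := hg3.mul hD
    have hval : 3*y^2 * (kBes n y * kBes (n+2) y - kBes (n+1) y * kBes (n+1) y)
        + y^3 * (((-(kBes (n+1) y) + (n:ℝ)/y * kBes n y) * kBes (n+2) y
            + kBes n y * (-(kBes (n+1) y) - ((n:ℝ)+3)/y * kBes (n+2) y))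
          - ((-(kBes (n+1+1) y) + ((n+1:ℕ):ℝ)/y * kBes (n+1) y) * kBes (n+1) y
            + kBes (n+1) y * (-(kBes (n+1+1) y) + ((n+1:ℕ):ℝ)/y * kBes (n+1) y)))
        = -(2*y^2*(kBes (n+1) y * kBes (n+1) y)) := by
      rw [show n+1+1 = n+2 by omega, kBes_rec n hy]
      push_cast
      field_simp
      ring
    rw [hgdef, ← hval]
    exact hprod
  have hanti : StrictAntiOn g (Set.Ioi 0) := by
    apply strictAntiOn_of_deriv_neg (convex_Ioi 0)
    · intro y hy
      exact ((hgd y hy).differentiableAt.continuousAt).continuousWithinAt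
    · intro y hy
      rw [interior_Ioi] at hy
      rw [(hgd y hy).deriv]
      have h := kBes_pos (n+1) hy
      have hy0 : (0:ℝ) < y := hy
      have : (0:ℝ) < 2*y^2*(kBes (n+1) y * kBes (n+1) y) :=
        mul_pos (mul_pos (by norm_num) (pow_pos hy0 2)) (mul_pos h h)
      linarith
  have hge : ∀ z : ℝ, 0 < z → 0 ≤ g z := by
    intro z hz
    have htend : Filter.Tendsto
        (fun y : ℝ => -((sC (n+1))^2 * ((y^3 * Real.exp (-y)) * Real.exp (-y))))
        Filter.atTop (nhds 0) := by
      have t1 := tendsto_pow_mul_exp_neg_atTop_nhds_zero 3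
      have t2 : Filter.Tendsto (fun y : ℝ => Real.exp (-y)) Filter.atTop (nhds 0) := by
        exact Real.tendsto_exp_neg_atTop_nhds_zero
      have t3 := t1.mul t2
      rw [mul_zero] at t3
      have t4 := t3.const_mul (-((sC (n+1))^2))
      rw [mul_zero] at t4
      simpa [neg_mul] using t4
    refine le_of_tendsto htend ?_
    filter_upwards [Filter.eventually_gt_atTop z, Filter.eventually_ge_atTop (1:ℝ)]
      with y h1 h2
    have hy0 : (0:ℝ) < y := lt_of_lt_of_le one_pos h2
    have hmem : g y < g z := hanti (Set.mem_Ioi.mpr hz) (Set.mem_Ioi.mpr hy0) h1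
    have hkb := kBes_le (n+1) h2
    have hkp := kBes_pos (n+1) hy0
    have hb1 : kBes (n+1) y * kBes (n+1) y ≤ (Real.exp (-y) * sC (n+1))^2 := by
      nlinarith
    have hnn : 0 ≤ kBes n y * kBes (n+2) y :=
      mul_nonneg (kBes_pos n hy0).le (kBes_pos (n+2) hy0).le
    have hgy : -((sC (n+1))^2 * ((y^3 * Real.exp (-y)) * Real.exp (-y))) ≤ g y := by
      simp only [hgdef]
      have hy3 : (0:ℝ) ≤ y^3 := by positivity
      nlinarith
    linarith
  have hfin : 0 < g x := by
    have h1 := hge (x+1) (by linarith)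
    have h2 : g (x+1) < g x :=
      hanti (Set.mem_Ioi.mpr hx) (Set.mem_Ioi.mpr (by linarith)) (by linarith)
    linarith
  simp only [hgdef] at hfin
  by_contra hc
  push_neg at hc
  have : x^3 * (kBes n x * kBes (n+2) x - kBes (n+1) x * kBes (n+1) x) ≤ 0 :=
    mul_nonpos_of_nonneg_of_nonpos (by positivity) (by linarith)
  linarith

lemma key (n : ℕ) {x : ℝ} (hx : 0 < x) :
    2*(n:ℝ) * (iBes n x * kBes n x) < x * (iBes n x * kBes (n+1) x - iBes (n+1) x * kBes n x) := by
  have hx' : x ≠ 0 := ne_of_gt hx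
  cases n with
  | zero =>
    have heq : x * (iBes 0 x * kBes 1 x - iBes 1 x * kBes 0 x)
        = Real.exp (-x) / x^2 * (Real.exp x - Real.exp (-x)*(x+1)) := by
      rw [iBes_eq 0 hx, iBes_eq 1 hx, kBes_eq 0 hx, kBes_eq 1 hx, psB_zero_fun, psB_one,
        thB_zero_fun, thB_one]
      norm_num
      field_simp
      ring
    have hFE : Real.exp (-x) * Real.exp x = 1 := by rw [← Real.exp_add]; simp
    have hE2 : 2*x+1 ≤ Real.exp x * Real.exp x := by
      have := Real.add_one_le_exp (2*x)
      rw [show (2:ℝ)*x = x+x by ring, Real.exp_add] at this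
      linarith
    have hdiff : 0 < Real.exp x - Real.exp (-x)*(x+1) := by
      nlinarith [Real.exp_pos x, Real.exp_pos (-x)]
    have h0 : (0:ℝ) < Real.exp (-x) / x^2 := by positivity
    push_cast
    rw [show (2:ℝ)*0*(iBes 0 x * kBes 0 x) = 0 by ring, heq]
    exact mul_pos h0 hdiff
  | succ m =>
    set i1 := iBes (m+1) x with hi1def
    set i2 := iBes (m+2) x with hi2def
    set k1 := kBes (m+1) x with hk1def
    set k2 := kBes (m+2) x with hk2def
    have hi1 : 0 < i1 := iBes_pos (m+1) hx
    have hi2 : 0 < i2 := iBes_pos (m+2) hx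
    have hk1 : 0 < k1 := kBes_pos (m+1) hx
    have hk2 : 0 < k2 := kBes_pos (m+2) hx
    have hti := turan_i m hx
    have htk := turan_k m hx
    have him : iBes m x = i2 + (2*(m:ℝ)+3)/x * i1 := by
      rw [hi2def, iBes_rec m hx]; ring
    have hkm : kBes m x = k2 - (2*(m:ℝ)+3)/x * k1 := by
      rw [hk2def, kBes_rec m hx]; ring
    have h3i := mul_lt_mul_of_pos_left hti hx
    have h3k := mul_lt_mul_of_pos_left htk hx
    rw [him] at h3i
    rw [hkm] at h3k
    have hA : x*(i2*i2) + (2*(m:ℝ)+3)*(i1*i2) < x*(i1*i1) := by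
      have e1 : x * ((i2 + (2*(m:ℝ)+3)/x * i1) * i2) = x*(i2*i2) + (2*(m:ℝ)+3)*(i1*i2) := by
        field_simp
      rw [e1] at h3i
      exact h3i
    have hB : x*(k1*k1) + (2*(m:ℝ)+3)*(k1*k2) < x*(k2*k2) := by
      have e1 : x * ((k2 - (2*(m:ℝ)+3)/x * k1) * k2) = x*(k2*k2) - (2*(m:ℝ)+3)*(k1*k2) := by
        field_simp
      rw [e1] at h3k
      linarith
    have hab : (0:ℝ) < x*(i1*k2) + x*(i2*k1) := by positivity
    have h5 : 0 < (x*(i1*k2) + x*(i2*k1)) * (x*(i1*k2) - x*(i2*k1) - (2*(m:ℝ)+3)*(i1*k1)) := by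
      have hid : (x*(i1*k2) + x*(i2*k1)) * (x*(i1*k2) - x*(i2*k1) - (2*(m:ℝ)+3)*(i1*k1))
          = x*(i1*i1)*(x*(k2*k2) - (x*(k1*k1) + (2*(m:ℝ)+3)*(k1*k2)))
            + x*(k1*k1)*(x*(i1*i1) - (x*(i2*i2) + (2*(m:ℝ)+3)*(i1*i2))) := by ring
      rw [hid]
      have p1 : 0 < x*(i1*i1) := by positivity
      have p2 : 0 < x*(k1*k1) := by positivity
      nlinarith [hA, hB]
    have h6 : 0 < x*(i1*k2) - x*(i2*k1) - (2*(m:ℝ)+3)*(i1*k1) := by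
      by_contra hc
      push_neg at hc
      have := mul_nonpos_of_nonneg_of_nonpos hab.le hc
      linarith
    have hik : 0 < i1*k1 := mul_pos hi1 hk1
    push_cast
    nlinarith [h6, hik]

set_option maxHeartbeats 1000000 in
lemma assemble (nr x eps epss i i' k k' : ℝ) (hx : 0 < x) (hi : 0 < i) (hi' : 0 < i')
    (hk : 0 < k) (hk' : 0 < k') (hnr : 0 ≤ nr)
    (hW : 2*nr*(i*k) < x*(i*k' - i'*k)) (heps : 0 < eps) (hle : eps ≤ epss) :
    0 < (nr*(eps-epss)*i - x*epss*i')^2 * (nr*k - x*k') * k * (-1:ℝ)^2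
      - (nr*(eps-epss)*i - x*epss*i') * (nr*(eps-epss)*k + x*epss*k') * x * i * k
          * (2*nr/x + i'/i - k'/k) * (-1)
      + (nr*(eps-epss)*k + x*epss*k')^2 * (nr*i + x*i') * i := by
  have hx' : x ≠ 0 := ne_of_gt hx
  have hi0 : i ≠ 0 := ne_of_gt hi
  have hk0 : k ≠ 0 := ne_of_gt hk
  have hepss : 0 < epss := lt_of_lt_of_le heps hle
  set A := nr*(eps-epss)*i - x*epss*i' with hA
  set B := nr*(eps-epss)*k + x*epss*k' with hB
  have hF : x*i*k*(2*nr/x + i'/i - k'/k) = 2*nr*(i*k) + x*(i'*k) - x*(i*k') := by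
    field_simp
  have hfac : A^2 * (nr*k - x*k') * k * (-1:ℝ)^2
      - A * B * x * i * k * (2*nr/x + i'/i - k'/k) * (-1)
      + B^2 * (nr*i + x*i') * i
      = (A*k + B*i) * (A*(nr*k - x*k') + B*(nr*i + x*i')) := by
    have h1 : A * B * x * i * k * (2*nr/x + i'/i - k'/k)
        = A*B*(2*nr*(i*k) + x*(i'*k) - x*(i*k')) := by
      linear_combination (A*B) * hF
    linear_combination h1
  rw [hfac]
  have hik : 0 < i*k := mul_pos hi hk
  have hnrik : 0 ≤ 2*nr*(i*k) := by positivity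
  have hf1 : 0 < A*k + B*i := by
    have hAkBi : A*k + B*i = epss*(x*(i*k' - i'*k)) - 2*nr*(i*k)*(epss-eps) := by
      rw [hA, hB]; ring
    rw [hAkBi]
    have h2 := mul_lt_mul_of_pos_left hW hepss
    have h4 : 2*nr*(i*k)*(epss-eps) ≤ epss*(2*nr*(i*k)) := by
      nlinarith [mul_nonneg hnrik heps.le]
    linarith
  have hf2 : 0 < A*(nr*k - x*k') + B*(nr*i + x*i') := by
    have hADBC : A*(nr*k - x*k') + B*(nr*i + x*i')
        = nr*(2*epss-eps)*(x*(i*k' - i'*k)) - 2*nr^2*(i*k)*(epss-eps)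
          + 2*x^2*epss*(i'*k') := by
      rw [hA, hB]; ring
    rw [hADBC]
    have hco : 0 ≤ nr*(2*epss-eps) := by nlinarith
    have h2 := mul_le_mul_of_nonneg_left hW.le hco
    have h3 : 0 < 2*x^2*epss*(i'*k') := by positivity
    have h4 : 2*nr^2*(i*k)*(epss-eps) ≤ nr*(2*epss-eps)*(2*nr*(i*k)) := by
      nlinarith [mul_nonneg (mul_nonneg (mul_nonneg hnr hnr) hik.le) hepss.le]
    linarith
  exact mul_pos hf1 hf2



/-- For every integer `n ≥ 0`, every real `x > 0`, and all reals `ε, ε_s` with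
`0 < ε ≤ ε_s`, the quadratic `f_n` satisfies `f_n(−1) > 0`. -/
theorem fquad_at_neg_one_pos (n : ℕ) (x : ℝ) (hx : 0 < x) (eps epss : ℝ)
    (heps : 0 < eps) (hle : eps ≤ epss) :
    0 < fquad n x eps epss (-1) := by
  have h := assemble (n:ℝ) x eps epss (iBes n x) (iBes (n+1) x) (kBes n x) (kBes (n+1) x)
    hx (iBes_pos n hx) (iBes_pos (n+1) hx) (kBes_pos n hx) (kBes_pos (n+1) hx)
    (Nat.cast_nonneg n) (key n hx) heps hle
  show 0 < (let A : ℝ := (n : ℝ) * (eps - epss) * iBes n x - x * epss * iBes (n + 1) x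
    let B : ℝ := (n : ℝ) * (eps - epss) * kBes n x + x * epss * kBes (n + 1) x
    let C : ℝ := (n : ℝ) * iBes n x + x * iBes (n + 1) x
    let D : ℝ := (n : ℝ) * kBes n x - x * kBes (n + 1) x
    let F : ℝ := 2 * (n : ℝ) / x + iBes (n + 1) x / iBes n x - kBes (n + 1) x / kBes n x
    A ^ 2 * D * kBes n x * (-1:ℝ) ^ 2 - A * B * x * iBes n x * kBes n x * F * (-1)
      + B ^ 2 * C * iBes n x)
  simp only []
  convert h using 2 <;> ring
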